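/- Let G be a simple graph, u, v adjacent vertices of G, and G' = G[u→v] the graph obtained by the Kelmans operation. Then the circumference of G' is at most the circumference of G, i.e., every cycle length achieved in G' is at most the maximum cycle length of G. -/

import Mathlib

/-- The Kelmans operation `G[u → v]`: every edge `wu` with `w ∈ N(u) \\ N[v]` is removed
and replaced by the edge `wv`. -/
def kelmans {V : Type*} (G : SimpleGraph V) (u v : V) : SimpleGraph V where
  Adj x y := x ≠ y ∧
    ((G.Adj x y ∧ ¬ ((x = u ∧ G.Adj u y ∧ ¬ G.Adj v y ∧ y ≠ v) ∨
                     (y = u ∧ G.Adj u x ∧ ¬ G.Adj v x ∧ x ≠ v))) ∨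
     ((x = v ∧ G.Adj u y ∧ ¬ G.Adj v y ∧ y ≠ v) ∨
      (y = v ∧ G.Adj u x ∧ ¬ G.Adj v x ∧ x ≠ v)))
  symm := by
    constructor
    rintro x y ⟨hxy, h⟩
    refine ⟨hxy.symm, ?_⟩
    have hsymm : G.Adj x y ↔ G.Adj y x := ⟨SimpleGraph.Adj.symm, SimpleGraph.Adj.symm⟩
    tauto
  loopless := by constructor; rintro x ⟨h, -⟩; exact h rfl

namespace KelmansAux

open SimpleGraph Walk

variable {V : Type*} {G : SimpleGraph V} {u v : V}

lemma adj_of_adj {x y : V} (h : (kelmans G u v).Adj x y) (hx : x ≠ v) (hy : y ≠ v) :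
    G.Adj x y := by
  obtain ⟨hne, h⟩ := h
  tauto

lemma adj_u {y : V} (huv : G.Adj u v) (h : (kelmans G u v).Adj u y) (hy : y ≠ v) :
    G.Adj u y ∧ G.Adj v y := by
  have hne : u ≠ v := huv.ne
  obtain ⟨hne', h⟩ := h
  rcases h with ⟨hadj, hrem⟩ | ⟨⟨h1, h2, h3, h4⟩ | ⟨h1, h2, h3, h4⟩⟩
  · refine ⟨hadj, ?_⟩
    by_contra hvy
    exact hrem (Or.inl ⟨rfl, hadj, hvy, hy⟩)
  · exact absurd h1 hne
  · exact absurd h1 hy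

lemma adj_v {y : V} (h : (kelmans G u v).Adj v y) :
    G.Adj v y ∨ (G.Adj u y ∧ ¬ G.Adj v y) := by
  obtain ⟨hne, h⟩ := h
  rcases h with ⟨hadj, -⟩ | ⟨⟨-, h2, h3, -⟩ | ⟨h1, -⟩⟩
  · exact Or.inl hadj
  · exact Or.inr ⟨h2, h3⟩
  · exact absurd h1.symm hne

/-- Map a walk along an arbitrary vertex function that sends all its edges to edges. -/
lemma exists_map_walk {G' : SimpleGraph V} (f : V → V) {a b : V} (p : G'.Walk a b)
    (h : ∀ x y, s(x, y) ∈ p.edges → G.Adj (f x) (f y)) :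
    ∃ p' : G.Walk (f a) (f b), p'.support = p.support.map f ∧
      p'.edges = p.edges.map (Sym2.map f) ∧ p'.length = p.length := by
  induction p with
  | nil => exact ⟨Walk.nil, by simp, by simp, by simp⟩
  | @cons a c b hadj q ih =>
    obtain ⟨q', h1, h2, h3⟩ := ih (fun x y hxy => h x y (by simp [hxy]))
    have hfa : G.Adj (f a) (f c) := h a c (by simp)
    exact ⟨Walk.cons hfa q', by simp [h1], by simp [h2], by simp [h3]⟩

lemma exists_map_cycle {G' : SimpleGraph V} (f : V → V) (hf : Function.Injective f) {a : V}
    (c : G'.Walk a a) (hc : c.IsCycle)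
    (h : ∀ x y, s(x, y) ∈ c.edges → G.Adj (f x) (f y)) :
    ∃ c' : G.Walk (f a) (f a), c'.IsCycle ∧ c'.length = c.length := by
  obtain ⟨c', h1, h2, h3⟩ := exists_map_walk f c h
  refine ⟨c', ⟨⟨⟨?_⟩, ?_⟩, ?_⟩, h3⟩
  · rw [h2]
    exact hc.edges_nodup.map (Sym2.map.injective hf)
  · intro hn
    have := hc.three_le_length
    rw [hn] at h3
    simp at h3
    omega
  · have ht : ∀ l : List V, (l.map f).tail = l.tail.map f := by
      intro l; cases l <;> simp
    rw [h1, ht]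
    exact hc.support_nodup.map hf
end KelmansAux

namespace KelmansAux

open SimpleGraph Walk

variable {V : Type*} {G : SimpleGraph V} {u v : V}

/-- The edge condition for the swap `u ↔ v`. -/
lemma swap_edge_adj [DecidableEq V] (huv : G.Adj u v) {a b : V} (hab : (kelmans G u v).Adj a b)
    (ha : a = v → b = u ∨ (G.Adj u b ∧ ¬ G.Adj v b))
    (hb : b = v → a = u ∨ (G.Adj u a ∧ ¬ G.Adj v a)) :
    G.Adj (Equiv.swap u v a) (Equiv.swap u v b) := by
  by_cases hav : a = v
  · rcases ha hav with hbu | ⟨h1p, h2p⟩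
    · rw [hav, hbu, Equiv.swap_apply_right, Equiv.swap_apply_left]
      exact huv
    · have hbv : b ≠ v := fun h => hab.ne' (h.trans hav.symm)
      have hbu : b ≠ u := h1p.ne'
      rw [hav, Equiv.swap_apply_right, Equiv.swap_apply_of_ne_of_ne hbu hbv]
      exact h1p
  · by_cases hbv : b = v
    · rcases hb hbv with hau | ⟨h1p, h2p⟩
      · rw [hbv, hau, Equiv.swap_apply_right, Equiv.swap_apply_left]
        exact huv.symm
      · have hau' : a ≠ u := h1p.ne'
        rw [hbv, Equiv.swap_apply_right, Equiv.swap_apply_of_ne_of_ne hau' hav]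
        exact h1p.symm
    · by_cases hau : a = u
      · have hbu : b ≠ u := fun h => hab.ne (hau.trans h.symm)
        have h2 := adj_u huv (hau ▸ hab) hbv
        rw [hau, Equiv.swap_apply_left, Equiv.swap_apply_of_ne_of_ne hbu hbv]
        exact h2.2
      · by_cases hbu : b = u
        · have h2 := adj_u huv (hbu ▸ hab.symm) hav
          rw [hbu, Equiv.swap_apply_left, Equiv.swap_apply_of_ne_of_ne hau hav]
          exact h2.2.symm
        · rw [Equiv.swap_apply_of_ne_of_ne hau hav, Equiv.swap_apply_of_ne_of_ne hbu hbv]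
          exact adj_of_adj hab hav hbv

lemma exists_concat_of_ne {G' : SimpleGraph V} {x u : V} (p : G'.Walk x u) (h : x ≠ u) :
    ∃ (z : V) (r : G'.Walk x z) (h' : G'.Adj z u), p = r.concat h' := by
  cases p with
  | nil => exact absurd rfl h
  | cons hadj p' =>
    obtain ⟨z, r, h', hp⟩ := Walk.exists_cons_eq_concat hadj p'
    exact ⟨z, r, h', hp⟩

/-- The mixed case: the first edge at `v` is a new edge, the last one an old edge. -/
lemma coreMixed (huv : G.Adj u v) {x y : V} (q : (kelmans G u v).Walk x y)
    (h1 : (kelmans G u v).Adj v x) (h2 : (kelmans G u v).Adj y v)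
    (hx : G.Adj u x ∧ ¬ G.Adj v x) (hy : G.Adj v y)
    (hcyc : (Walk.cons h1 (q.concat h2)).IsCycle) :
    ∃ (b : V) (c' : G.Walk b b), c'.IsCycle ∧
      (Walk.cons h1 (q.concat h2)).length ≤ c'.length := by
  classical
  set c := Walk.cons h1 (q.concat h2) with hcdef
  have hsup : c.support = v :: (q.support ++ [v]) := by
    simp [hcdef, support_concat]
  have hqvn : (q.support ++ [v]).Nodup := by
    have := hcyc.support_nodup
    rwa [hsup] at this
  have hqn : q.support.Nodup := (List.nodup_append'.mp hqvn).1
  have hvq : v ∉ q.support := by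
    intro hmem
    rcases List.nodup_append'.mp hqvn with ⟨-, -, hdisj⟩
    exact hdisj hmem (by simp)
  have hedges : c.edges = s(v, x) :: (q.edges ++ [s(y, v)]) := by
    simp [hcdef, edges_concat]
  have hmid : ∀ a b : V, s(a, b) ∈ q.edges → a ≠ v ∧ b ≠ v ∧ (kelmans G u v).Adj a b := by
    intro a b he
    exact ⟨fun h => hvq (h ▸ q.fst_mem_support_of_mem_edges he),
      fun h => hvq (h ▸ q.snd_mem_support_of_mem_edges he),
      q.adj_of_mem_edges he⟩
  have hmidG : ∀ a b : V, s(a, b) ∈ q.edges → G.Adj (id a) (id b) := by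
    intro a b he
    obtain ⟨hav, hbv, hadj⟩ := hmid a b he
    exact adj_of_adj hadj hav hbv
  have hxv : x ≠ v := h1.ne'
  have hyv : y ≠ v := h2.ne
  have hxu : x ≠ u := hx.1.ne'
  have hunev : u ≠ v := huv.ne
  have hlenc : c.length = q.length + 2 := by
    rw [hcdef, Walk.length_cons, Walk.length_concat]
  by_cases hyu : y = u
  · -- the last edge is the edge `uv`: swap `u` and `v`
    have hcond : ∀ a b : V, s(a, b) ∈ c.edges →
        G.Adj (Equiv.swap u v a) (Equiv.swap u v b) := by
      intro a b he
      rw [hedges] at he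
      simp only [List.mem_cons, List.mem_append, List.mem_singleton, List.not_mem_nil,
        or_false] at he
      rcases he with he | he | he
      · rw [Sym2.eq_iff] at he
        rcases he with h | h
        · rw [h.1, h.2]
          exact swap_edge_adj huv h1 (fun _ => Or.inr hx) (fun hb' => absurd hb' hxv)
        · rw [h.1, h.2]
          exact swap_edge_adj huv h1.symm (fun ha' => absurd ha' hxv) (fun _ => Or.inr hx)
      · obtain ⟨hav, hbv, hadj⟩ := hmid a b he
        exact swap_edge_adj huv hadj (fun h => absurd h hav) (fun h => absurd h hbv)
      · rw [Sym2.eq_iff] at he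
        rcases he with h | h
        · rw [h.1, h.2]
          exact swap_edge_adj huv h2 (fun ha' => absurd ha' hyv) (fun _ => Or.inl hyu)
        · rw [h.1, h.2]
          exact swap_edge_adj huv h2.symm (fun _ => Or.inl hyu) (fun hb' => absurd hb' hyv)
    obtain ⟨c', hc', hlen⟩ := exists_map_cycle (G := G) (Equiv.swap u v)
      (Equiv.injective _) c hcyc hcond
    exact ⟨Equiv.swap u v v, c', hc', hlen.ge⟩
  · by_cases hu : u ∈ q.support
    · -- rerouting: `u` lies on the interior path
      set q1 := q.takeUntil u hu with hq1def
      set q2 := q.dropUntil u hu with hq2def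
      have hspec : q1.append q2 = q := q.take_spec hu
      have hsupq : q.support = q1.support ++ q2.support.tail := by
        rw [← hspec, Walk.support_append]
      have hedgeq : q.edges = q1.edges ++ q2.edges := by
        rw [← hspec, Walk.edges_append]
      have hlenq : q1.length + q2.length = q.length := by
        rw [← hspec, Walk.length_append]
      obtain ⟨z, r, hz, hr⟩ := exists_concat_of_ne q1 hxu
      have hq1s : q1.support = r.support ++ [u] := by rw [hr, Walk.support_concat]
      have hq1e : q1.edges = r.edges ++ [s(z, u)] := by rw [hr, Walk.edges_concat, List.concat_eq_append]
      have hq1l : q1.length = r.length + 1 := by rw [hr, Walk.length_concat]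
      have hnd := hqn
      rw [hsupq] at hnd
      obtain ⟨hnd1, hnd2, hdisj⟩ := List.nodup_append'.mp hnd
      have hnd1' := hnd1
      rw [hq1s] at hnd1'
      obtain ⟨hndr, -, hdisjru⟩ := List.nodup_append'.mp hnd1'
      have hur : u ∉ r.support := fun h => hdisjru h (by simp)
      have hq2sup : q2.support = u :: q2.support.tail := q2.support_eq_cons
      have huq2t : u ∉ q2.support.tail := by
        intro h
        exact hdisj (by rw [hq1s]; simp) h
      have hndq2 : q2.support.Nodup := by
        rw [hq2sup]
        exact List.nodup_cons.mpr ⟨huq2t, hnd2⟩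
      have hsub1 : q1.support ⊆ q.support := q.support_takeUntil_subset hu
      have hsub2 : q2.support ⊆ q.support := q.support_dropUntil_subset hu
      have hrsub : r.support ⊆ q1.support := by
        rw [hq1s]
        exact fun a ha => List.mem_append_left _ ha
      have hvr : v ∉ r.support := fun h => hvq (hsub1 (hrsub h))
      have hvq2 : v ∉ q2.support := fun h => hvq (hsub2 h)
      have hzq : z ∈ r.support := r.end_mem_support
      have hzv : z ≠ v := fun h => hvr (h ▸ hzq)
      have hzadj := adj_u huv hz.symm hzv
      have hyq2t : y ∈ q2.support.tail := by
        have hy2 : y ∈ q2.support := q2.end_mem_support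
        rw [hq2sup] at hy2
        rcases List.mem_cons.mp hy2 with h | h
        · exact absurd h hyu
        · exact h
      have hyr : y ∉ r.support := fun h => hdisj (hrsub h) hyq2t
      have hyz : y ≠ z := fun h => hyr (h ▸ hzq)
      have hredge : ∀ a b : V, s(a, b) ∈ r.edges → G.Adj (id a) (id b) := by
        intro a b he
        apply hmidG
        rw [hedgeq, hq1e]
        exact List.mem_append_left _ (List.mem_append_left _ he)
      have hq2edge : ∀ a b : V, s(a, b) ∈ q2.edges → G.Adj (id a) (id b) := by
        intro a b he
        apply hmidG
        rw [hedgeq]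
        exact List.mem_append_right _ he
      obtain ⟨rG, hrs, hre, hrl⟩ := exists_map_walk (G := G) id r hredge
      obtain ⟨q2G, h2s, h2e, h2l⟩ := exists_map_walk (G := G) id q2 hq2edge
      simp only [List.map_id] at hrs h2s
      have hre' : rG.edges = r.edges := by
        rw [hre, Sym2.map_id, List.map_id]
      have h2e' : q2G.edges = q2.edges := by
        rw [h2e, Sym2.map_id, List.map_id]
      refine ⟨v, Walk.cons hy (q2G.reverse.append
        (Walk.cons hx.1 (rG.concat hzadj.2.symm))), ?_, ?_⟩
      · rw [Walk.cons_isCycle_iff]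
        constructor
        · rw [Walk.isPath_def]
          have hs : (q2G.reverse.append
              (Walk.cons hx.1 (rG.concat hzadj.2.symm))).support
              = q2.support.reverse ++ (r.support ++ [v]) := by
            rw [Walk.support_append, Walk.support_reverse, h2s]
            congr 1
            simp [Walk.support_concat, hrs]
          rw [hs, List.nodup_append']
          refine ⟨List.nodup_reverse.mpr hndq2, ?_, ?_⟩
          · rw [List.nodup_append']
            refine ⟨hndr, List.nodup_singleton v, ?_⟩
            intro a ha hb
            rw [List.mem_singleton] at hb
            subst hb
            exact hvr ha
          · intro a ha hb
            rw [List.mem_reverse] at ha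
            rw [List.mem_append, List.mem_singleton] at hb
            rcases hb with hb | hb
            · rw [hq2sup] at ha
              rcases List.mem_cons.mp ha with ha' | ha'
              · subst ha'
                exact hur hb
              · exact hdisj (hrsub hb) ha'
            · subst hb
              exact hvq2 ha
        · have he : (q2G.reverse.append
              (Walk.cons hx.1 (rG.concat hzadj.2.symm))).edges
              = q2.edges.reverse ++ (s(u, x) :: (r.edges ++ [s(z, v)])) := by
            rw [Walk.edges_append, Walk.edges_reverse, h2e']
            congr 1
            simp [Walk.edges_concat, hre']
          rw [he]
          simp only [List.mem_append, List.mem_cons, List.mem_singleton, List.mem_reverse,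
            List.not_mem_nil, or_false]
          rintro (h | h | h | h)
          · exact hvq2 (q2.fst_mem_support_of_mem_edges h)
          · rw [Sym2.eq_iff] at h
            rcases h with h | h
            · exact hunev h.1.symm
            · exact hxv h.1.symm
          · exact hvr (r.fst_mem_support_of_mem_edges h)
          · rw [Sym2.eq_iff] at h
            rcases h with h | h
            · exact hzv h.1.symm
            · exact hyz h.2
      · have hl : (Walk.cons hy (q2G.reverse.append
            (Walk.cons hx.1 (rG.concat hzadj.2.symm)))).length
            = q2.length + r.length + 3 := by
          rw [Walk.length_cons, Walk.length_append, Walk.length_reverse, Walk.length_cons,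
            Walk.length_concat, h2l, hrl]
          omega
        rw [hlenc, hl]
        omega
    · -- `u` is not on the cycle: insert it between `v` and `x`
      obtain ⟨qG, hqs, hqe, hql⟩ := exists_map_walk (G := G) id q hmidG
      simp only [List.map_id] at hqs
      have hqe' : qG.edges = q.edges := by
        rw [hqe, Sym2.map_id, List.map_id]
      refine ⟨v, Walk.cons huv.symm (Walk.cons hx.1 (qG.concat hy.symm)), ?_, ?_⟩
      · rw [Walk.cons_isCycle_iff]
        constructor
        · rw [Walk.isPath_def]
          have hs : (Walk.cons hx.1 (qG.concat hy.symm)).support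
              = u :: (q.support ++ [v]) := by
            simp [Walk.support_concat, hqs]
          rw [hs, List.nodup_cons]
          refine ⟨?_, hqvn⟩
          simp only [List.mem_append, List.mem_singleton]
          rintro (h | h)
          · exact hu h
          · exact hunev h
        · have he : (Walk.cons hx.1 (qG.concat hy.symm)).edges
              = s(u, x) :: (q.edges ++ [s(y, v)]) := by
            simp [Walk.edges_concat, hqe']
          rw [he]
          simp only [List.mem_cons, List.mem_append, List.mem_singleton, List.not_mem_nil,
            or_false]
          rintro (h | h | h)
          · rw [Sym2.eq_iff] at h
            rcases h with h | h
            · exact hunev h.1.symm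
            · exact hxv h.1.symm
          · exact hvq (q.fst_mem_support_of_mem_edges h)
          · rw [Sym2.eq_iff] at h
            rcases h with h | h
            · exact hyv h.1.symm
            · exact hyu h.2.symm
      · have hl : (Walk.cons huv.symm (Walk.cons hx.1 (qG.concat hy.symm))).length
            = q.length + 3 := by
          rw [Walk.length_cons, Walk.length_cons, Walk.length_concat, hql]
        rw [hlenc, hl]
        omega

lemma core (huv : G.Adj u v) {x y : V} (q : (kelmans G u v).Walk x y)
    (h1 : (kelmans G u v).Adj v x) (h2 : (kelmans G u v).Adj y v)
    (hcyc : (Walk.cons h1 (q.concat h2)).IsCycle) :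
    ∃ (b : V) (c' : G.Walk b b), c'.IsCycle ∧
      (Walk.cons h1 (q.concat h2)).length ≤ c'.length := by
  classical
  set c := Walk.cons h1 (q.concat h2) with hcdef
  have hsup : c.support = v :: (q.support ++ [v]) := by
    simp [hcdef, support_concat]
  have hqvn : (q.support ++ [v]).Nodup := by
    have := hcyc.support_nodup
    rwa [hsup] at this
  have hvq : v ∉ q.support := by
    intro hmem
    rcases List.nodup_append'.mp hqvn with ⟨-, -, hdisj⟩
    exact hdisj hmem (by simp)
  have hedges : c.edges = s(v, x) :: (q.edges ++ [s(y, v)]) := by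
    simp [hcdef, edges_concat]
  have hmid : ∀ a b : V, s(a, b) ∈ q.edges → a ≠ v ∧ b ≠ v ∧ (kelmans G u v).Adj a b := by
    intro a b he
    exact ⟨fun h => hvq (h ▸ q.fst_mem_support_of_mem_edges he),
      fun h => hvq (h ▸ q.snd_mem_support_of_mem_edges he),
      q.adj_of_mem_edges he⟩
  rcases adj_v h1 with hx | hx
  · rcases adj_v h2.symm with hy | hy
    · -- both old edges: the cycle is already a cycle of G (map by `id`)
      have hcond : ∀ a b : V, s(a, b) ∈ c.edges → G.Adj (id a) (id b) := by
        intro a b he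
        rw [hedges] at he
        simp only [List.mem_cons, List.mem_append, List.mem_singleton, List.not_mem_nil, or_false] at he
        simp only [id_eq]
        rcases he with he | he | he
        · rw [Sym2.eq_iff] at he
          rcases he with h | h
          · rw [h.1, h.2]; exact hx
          · rw [h.1, h.2]; exact hx.symm
        · exact adj_of_adj (hmid a b he).2.2 (hmid a b he).1 (hmid a b he).2.1
        · rw [Sym2.eq_iff] at he
          rcases he with h | h
          · rw [h.1, h.2]; exact hy.symm
          · rw [h.1, h.2]; exact hy
      obtain ⟨c', hc', hlen⟩ := exists_map_cycle (G := G) id Function.injective_id c hcyc hcond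
      exact ⟨v, c', hc', hlen.ge⟩
    · -- first old, last new: reverse and use the mixed case
      have hrev : c.reverse = Walk.cons h2.symm (q.reverse.concat h1.symm) := by
        simp [hcdef, reverse_concat, concat_cons, concat_eq_append]
      have hrevcyc : (Walk.cons h2.symm (q.reverse.concat h1.symm)).IsCycle := by
        rw [← hrev]
        refine ⟨⟨?_, ?_⟩, ?_⟩
        · exact Walk.IsTrail.reverse c hcyc.isCircuit.isTrail
        · intro hn
          have h3 := hcyc.three_le_length
          have h0 : c.reverse.length = 0 := by rw [hn]; rfl
          rw [length_reverse] at h0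
          omega
        · rw [support_reverse, hsup]
          have htl : (v :: (q.support ++ [v])).reverse.tail = q.support.reverse ++ [v] := by
            simp
          rw [htl, List.nodup_append']
          have h1n : q.support.Nodup := (List.nodup_append'.mp hqvn).1
          refine ⟨List.nodup_reverse.mpr h1n, List.nodup_singleton v, ?_⟩
          intro z hz hz'
          rw [List.mem_reverse] at hz
          rw [List.mem_singleton] at hz'
          subst hz'
          exact hvq hz
      obtain ⟨b, c', hc', hlen⟩ := coreMixed huv q.reverse h2.symm h1.symm hy hx hrevcyc
      refine ⟨b, c', hc', le_trans ?_ hlen⟩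
      rw [← hrev, length_reverse]
  · rcases adj_v h2.symm with hy | hy
    · -- first new, last old: the mixed case directly
      exact coreMixed huv q h1 h2 hx hy hcyc
    · -- both new: swap u and v
      have hxv : x ≠ v := h1.ne'
      have hyv : y ≠ v := h2.ne
      have hcond : ∀ a b : V, s(a, b) ∈ c.edges →
          G.Adj (Equiv.swap u v a) (Equiv.swap u v b) := by
        intro a b he
        rw [hedges] at he
        simp only [List.mem_cons, List.mem_append, List.mem_singleton, List.not_mem_nil, or_false] at he
        rcases he with he | he | he
        · rw [Sym2.eq_iff] at he
          rcases he with h | h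
          · rw [h.1, h.2]
            exact swap_edge_adj huv h1 (fun _ => Or.inr hx) (fun hb' => absurd hb' hxv)
          · rw [h.1, h.2]
            exact swap_edge_adj huv h1.symm (fun ha' => absurd ha' hxv) (fun _ => Or.inr hx)
        · obtain ⟨hav, hbv, hadj⟩ := hmid a b he
          exact swap_edge_adj huv hadj (fun h => absurd h hav) (fun h => absurd h hbv)
        · rw [Sym2.eq_iff] at he
          rcases he with h | h
          · rw [h.1, h.2]
            exact swap_edge_adj huv h2 (fun ha' => absurd ha' hyv) (fun _ => Or.inr hy)
          · rw [h.1, h.2]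
            exact swap_edge_adj huv h2.symm (fun _ => Or.inr hy) (fun hb' => absurd hb' hyv)
      obtain ⟨c', hc', hlen⟩ := exists_map_cycle (G := G) (Equiv.swap u v)
        (Equiv.injective _) c hcyc hcond
      exact ⟨Equiv.swap u v v, c', hc', hlen.ge⟩

end KelmansAux

/-- If `u` and `v` are adjacent, every cycle length achieved in `G[u → v]` is at most
the length of some cycle of `G` (so the circumference does not increase). -/
theorem stmt_6 {V : Type*} (G : SimpleGraph V) (u v : V) (huv : G.Adj u v)
    (a : V) (c : (kelmans G u v).Walk a a) (hc : c.IsCycle) :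
    ∃ (b : V) (c' : G.Walk b b), c'.IsCycle ∧ c.length ≤ c'.length := by
  classical
  open SimpleGraph Walk KelmansAux in
  by_cases hv : v ∈ c.support
  · -- rotate the cycle to start at `v`, then decompose it
    set c₀ := c.rotate v hv with hc₀
    have hc₀cyc : c₀.IsCycle := hc.rotate hv
    have hlen₀ : c₀.length = c.length := by
      rw [hc₀, Walk.rotate, Walk.length_append, Nat.add_comm, ← Walk.length_append,
        Walk.take_spec]
    cases hcc : c₀ with
    | nil => rw [hcc] at hc₀cyc; exact absurd rfl hc₀cyc.ne_nil
    | @cons _ w _ h p =>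
      cases p with
      | nil => exact absurd rfl h.ne
      | @cons _ z _ h' p' =>
        obtain ⟨t, q, h2, hq⟩ := Walk.exists_cons_eq_concat h' p'
        have hcyc2 : (Walk.cons h (q.concat h2)).IsCycle := by
          rw [← hq, ← hcc]
          exact hc₀cyc
        obtain ⟨b, c', hc', hlen⟩ := core huv q h h2 hcyc2
        refine ⟨b, c', hc', ?_⟩
        calc c.length = c₀.length := hlen₀.symm
          _ = (Walk.cons h (q.concat h2)).length := by rw [hcc, hq]
          _ ≤ c'.length := hlen
  · -- `v` is not on the cycle: every edge of `c` is an edge of `G`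
    have hcond : ∀ x y : V, s(x, y) ∈ c.edges → G.Adj (id x) (id y) := by
      intro x y he
      refine adj_of_adj (c.adj_of_mem_edges he) ?_ ?_
      · intro h; exact hv (h ▸ c.fst_mem_support_of_mem_edges he)
      · intro h; exact hv (h ▸ c.snd_mem_support_of_mem_edges he)
    obtain ⟨c', hc', hlen⟩ := exists_map_cycle (G := G) id Function.injective_id c hc hcond
    exact ⟨a, c', hc', hlen.ge⟩
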